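/- Let G be a simple connected graph on n ≥ 3 vertices with vertex connectivity κ(G) ≤ k for some k ≥ 1. Then SO(G) ≥ 2√2·(n−3) + 2√5, with equality if and only if G ≅ P_n, the path on n vertices. -/

import Mathlib

/-- The Sombor index of a finite simple graph:
`SO(G) = Σ_{uv ∈ E(G)} √(d(u)² + d(v)²)`. -/
noncomputable def somborIndex {V : Type*} [Fintype V] (G : SimpleGraph V) : ℝ := by
  classical
  exact ∑ e ∈ G.edgeFinset,
    Sym2.lift ⟨fun u v => Real.sqrt ((G.degree u : ℝ)^2 + (G.degree v : ℝ)^2),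
      fun u v => by simp [add_comm]⟩ e

/-- The vertex connectivity of `G` is at most `k`: either `G` has at most `k+1`
vertices, or some set of at most `k` vertices disconnects `G`. -/
def vertexConnAtMost {V : Type*} [Fintype V] (G : SimpleGraph V) (k : ℕ) : Prop :=
  Fintype.card V ≤ k + 1 ∨
    ∃ S : Finset V, S.card ≤ k ∧ ¬ (G.induce ((↑S : Set V)ᶜ)).Connected

/-- The edge connectivity of `G` is at most `k`: some set of at most `k` edges
of `G` disconnects `G`. -/
def edgeConnAtMost {V : Type*} [Fintype V] (G : SimpleGraph V) (k : ℕ) : Prop :=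
  ∃ F : Set (Sym2 V), F ⊆ G.edgeSet ∧ Nat.card F ≤ k ∧ ¬ (G.deleteEdges F).Connected


open Finset SimpleGraph

section SomborAux

set_option linter.unusedVariables false
set_option linter.unusedTactic false
set_option linter.unreachableTactic false
set_option linter.unusedSectionVars false



noncomputable def gg (d : ℕ) : ℝ :=
  (3 * Real.sqrt 2 - Real.sqrt 5) + (2 * Real.sqrt 5 - 4 * Real.sqrt 2) / d

lemma sqrt_eq_of_sq {x y : ℝ} (hx : 0 ≤ x) (h : x ^ 2 = y) : Real.sqrt y = x := by
  rw [← h]; exact Real.sqrt_sq hx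

lemma s2_facts : (Real.sqrt 2) ^ 2 = 2 ∧ 1.414 < Real.sqrt 2 ∧ Real.sqrt 2 < 1.415 := by
  have h := Real.sq_sqrt (by norm_num : (0:ℝ) ≤ 2)
  have h0 := Real.sqrt_nonneg 2
  exact ⟨h, by nlinarith, by nlinarith⟩

lemma s5_facts : (Real.sqrt 5) ^ 2 = 5 ∧ 2.236 < Real.sqrt 5 ∧ Real.sqrt 5 < 2.2361 := by
  have h0 := Real.sqrt_nonneg 5
  have h := Real.sq_sqrt (by norm_num : (0:ℝ) ≤ 5)
  exact ⟨h, by nlinarith, by nlinarith⟩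

lemma gg_one : gg 1 = Real.sqrt 5 - Real.sqrt 2 := by
  unfold gg; push_cast; ring

lemma gg_two : gg 2 = Real.sqrt 2 := by
  unfold gg; push_cast; ring

lemma key_eq {a b : ℕ} (hp : (a = 1 ∧ b = 2) ∨ (a = 2 ∧ b = 1) ∨ (a = 2 ∧ b = 2)) :
    gg a + gg b = Real.sqrt ((a:ℝ)^2 + (b:ℝ)^2) := by
  obtain ⟨h5, h5l, h5u⟩ := s5_facts
  obtain ⟨h2, h2l, h2u⟩ := s2_facts
  rcases hp with ⟨rfl, rfl⟩ | ⟨rfl, rfl⟩ | ⟨rfl, rfl⟩ <;> simp only [gg_one, gg_two]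
  · have e : ((1:ℕ):ℝ)^2 + ((2:ℕ):ℝ)^2 = (Real.sqrt 5)^2 := by push_cast; nlinarith
    rw [e, Real.sqrt_sq (by positivity)]; ring
  · have e : ((2:ℕ):ℝ)^2 + ((1:ℕ):ℝ)^2 = (Real.sqrt 5)^2 := by push_cast; nlinarith
    rw [e, Real.sqrt_sq (by positivity)]; ring
  · have e : ((2:ℕ):ℝ)^2 + ((2:ℕ):ℝ)^2 = (2 * Real.sqrt 2)^2 := by push_cast; nlinarith
    rw [e, Real.sqrt_sq (by positivity)]; ring

lemma key_ineq {a b : ℕ} (ha : 1 ≤ a) (hb : 1 ≤ b) (hab : ¬(a = 1 ∧ b = 1)) :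
    gg a + gg b ≤ Real.sqrt ((a:ℝ)^2 + (b:ℝ)^2) ∧
      (gg a + gg b = Real.sqrt ((a:ℝ)^2 + (b:ℝ)^2) → a ≤ 2 ∧ b ≤ 2) := by
  obtain ⟨h2, h2l, h2u⟩ := s2_facts
  obtain ⟨h5, h5l, h5u⟩ := s5_facts
  have h20 := Real.sqrt_nonneg 2
  have h50 := Real.sqrt_nonneg 5
  have hgle : ∀ d : ℕ, 1 ≤ d → gg d ≤ 3 * Real.sqrt 2 - Real.sqrt 5 := by
    intro d hd
    have hd0 : (0:ℝ) < d := by exact_mod_cast hd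
    have : (2 * Real.sqrt 5 - 4 * Real.sqrt 2) / d ≤ 0 :=
      div_nonpos_of_nonpos_of_nonneg (by nlinarith) (le_of_lt hd0)
    unfold gg; linarith
  by_cases hbig : 17 ≤ a^2 + b^2
  · have hsum : (17:ℝ) ≤ (a:ℝ)^2 + (b:ℝ)^2 := by exact_mod_cast hbig
    have hs0 : (0:ℝ) ≤ (a:ℝ)^2 + (b:ℝ)^2 := by positivity
    have hq := Real.sq_sqrt hs0
    have hqn := Real.sqrt_nonneg ((a:ℝ)^2 + (b:ℝ)^2)
    have hstrict : gg a + gg b < Real.sqrt ((a:ℝ)^2 + (b:ℝ)^2) := by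
      have := hgle a ha
      have := hgle b hb
      nlinarith
    exact ⟨le_of_lt hstrict, fun h => absurd h (ne_of_lt hstrict)⟩
  · push_neg at hbig
    have ha4 : a ≤ 4 := by nlinarith
    have hb4 : b ≤ 4 := by nlinarith
    have g3 : gg 3 = (3 * Real.sqrt 2 - Real.sqrt 5) + (2 * Real.sqrt 5 - 4 * Real.sqrt 2) / 3 := by
      unfold gg; norm_num
    -- helper for strict cases
    have hstrict13 : gg 1 + gg 3 < Real.sqrt (((1:ℕ):ℝ)^2 + ((3:ℕ):ℝ)^2) := by
      have hs : ((1:ℕ):ℝ)^2 + ((3:ℕ):ℝ)^2 = 10 := by push_cast; norm_num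
      rw [hs]
      have hq := Real.sq_sqrt (by norm_num : (0:ℝ) ≤ 10)
      have hqn := Real.sqrt_nonneg 10
      rw [gg_one, g3]; nlinarith
    have hstrict23 : gg 2 + gg 3 < Real.sqrt (((2:ℕ):ℝ)^2 + ((3:ℕ):ℝ)^2) := by
      have hs : ((2:ℕ):ℝ)^2 + ((3:ℕ):ℝ)^2 = 13 := by push_cast; norm_num
      rw [hs]
      have hq := Real.sq_sqrt (by norm_num : (0:ℝ) ≤ 13)
      have hqn := Real.sqrt_nonneg 13
      rw [gg_two, g3]; nlinarith
    have hstrict31 : gg 3 + gg 1 < Real.sqrt (((3:ℕ):ℝ)^2 + ((1:ℕ):ℝ)^2) := by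
      rw [show (((3:ℕ):ℝ)^2 + ((1:ℕ):ℝ)^2) = (((1:ℕ):ℝ)^2 + ((3:ℕ):ℝ)^2) by ring, show gg 3 + gg 1 = gg 1 + gg 3 by ring]
      exact hstrict13
    have hstrict32 : gg 3 + gg 2 < Real.sqrt (((3:ℕ):ℝ)^2 + ((2:ℕ):ℝ)^2) := by
      rw [show (((3:ℕ):ℝ)^2 + ((2:ℕ):ℝ)^2) = (((2:ℕ):ℝ)^2 + ((3:ℕ):ℝ)^2) by ring, show gg 3 + gg 2 = gg 2 + gg 3 by ring]
      exact hstrict23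
    interval_cases a <;> interval_cases b <;> first
      | exact absurd (by omega : a = 1 ∧ b = 1) hab
      | (exfalso; omega)
      | exact ⟨le_of_eq (key_eq (by omega)), fun _ => ⟨by omega, by omega⟩⟩
      | exact ⟨le_of_lt hstrict13, fun h => absurd h (ne_of_lt hstrict13)⟩
      | exact ⟨le_of_lt hstrict23, fun h => absurd h (ne_of_lt hstrict23)⟩
      | exact ⟨le_of_lt hstrict31, fun h => absurd h (ne_of_lt hstrict31)⟩
      | exact ⟨le_of_lt hstrict32, fun h => absurd h (ne_of_lt hstrict32)⟩


variable {V : Type*} [Fintype V] (G : SimpleGraph V) [DecidableRel G.Adj]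

lemma sum_lift_add [DecidableEq V] (w : V → ℝ) :
    ∑ e ∈ G.edgeFinset,
      Sym2.lift ⟨fun u v => w u + w v, fun u v => by simp [add_comm]⟩ e
      = ∑ v, (G.degree v : ℝ) * w v := by
  have h1 : ∑ d : G.Dart, w d.toProd.1 = ∑ v, (G.degree v : ℝ) * w v := by
    rw [← Finset.sum_fiberwise_of_maps_to (g := fun d : G.Dart => d.toProd.1)
      (fun d _ => Finset.mem_univ _)]
    refine Finset.sum_congr rfl fun v _ => ?_
    have : ∀ d ∈ Finset.univ.filter (fun d : G.Dart => d.toProd.1 = v),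
        w d.toProd.1 = w v := by
      intro d hd; rw [(Finset.mem_filter.1 hd).2]
    rw [Finset.sum_congr rfl this, Finset.sum_const, ← G.dart_fst_fiber_card_eq_degree v]
    simp [nsmul_eq_mul]
  have h2 : ∑ d : G.Dart, w d.toProd.1 = ∑ e ∈ G.edgeFinset,
      Sym2.lift ⟨fun u v => w u + w v, fun u v => by simp [add_comm]⟩ e := by
    rw [← Finset.sum_fiberwise_of_maps_to (g := fun d : G.Dart => d.edge) (t := G.edgeFinset)
      (fun d _ => mem_edgeFinset.2 d.edge_mem)]
    refine Finset.sum_congr rfl fun e he => ?_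
    induction e with
    | _ u v =>
      rw [mem_edgeFinset] at he
      set D : G.Dart := ⟨(u, v), he⟩ with hD
      have hfib : Finset.univ.filter (fun d : G.Dart => d.edge = s(u,v)) = {D, D.symm} := by
        have := D.edge_fiber
        convert this using 2
        exact Iff.rfl
      rw [hfib, Finset.sum_pair (by exact D.symm_ne.symm)]
      simp [D, Dart.symm]
  rw [← h2, h1]

section Graphs
variable {V : Type*} [Fintype V] {G : SimpleGraph V}



lemma card_le_edges (hG : G.Connected) [DecidableRel G.Adj] :
    Fintype.card V ≤ G.edgeFinset.card + 1 := by
  classical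
  have hne : Nonempty V := hG.nonempty
  obtain ⟨r⟩ := hne
  have H : ∀ v : V, v ≠ r → ∃ w, G.Adj v w ∧ G.dist w r < G.dist v r := by
    intro v hv
    obtain ⟨p, hp⟩ := hG.exists_walk_length_eq_dist v r
    have hpos : 0 < G.dist v r := hG.pos_dist_of_ne hv
    cases p with
    | nil => simp at hp; simp at hpos
    | cons h q =>
      refine ⟨_, h, ?_⟩
      have : G.dist _ r ≤ q.length := dist_le q
      simp [Walk.length_cons] at hp
      omega
  choose f hf1 hf2 using H
  let F : {v : V // v ≠ r} → G.edgeFinset := fun v =>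
    ⟨s(v.1, f v.1 v.2), mem_edgeFinset.2 (hf1 v.1 v.2)⟩
  have hinj : Function.Injective F := by
    rintro ⟨v, hv⟩ ⟨u, hu⟩ h
    simp only [F, Subtype.mk.injEq, Sym2.eq_iff] at h
    rcases h with ⟨rfl, -⟩ | ⟨h1, h2⟩
    · rfl
    · exfalso
      have hv' := hf2 v hv
      have hu' := hf2 u hu
      rw [h2] at hv'
      rw [← h1] at hu'
      omega
  have := Fintype.card_le_of_injective F hinj
  rw [Fintype.card_coe] at this
  have hcv : Fintype.card {v : V // v ≠ r} = Fintype.card V - 1 := by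
    simp [Fintype.card_subtype_compl]
  have : 0 < Fintype.card V := Fintype.card_pos_iff.2 ⟨r⟩
  omega



lemma degree_pos_of_connected [DecidableRel G.Adj] (hG : G.Connected)
    (h2 : 1 < Fintype.card V) (v : V) : 0 < G.degree v := by
  obtain ⟨w, hw⟩ := Fintype.exists_ne_of_one_lt_card h2 v
  obtain ⟨p⟩ := hG.preconnected v w
  cases p with
  | nil => exact absurd rfl hw
  | cons h q => exact G.degree_pos_iff_exists_adj v |>.2 ⟨_, h⟩

lemma adj_eq_of_degree_one [DecidableRel G.Adj] {x y z : V} (hd : G.degree x ≤ 1)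
    (hy : G.Adj x y) (hz : G.Adj x z) : y = z := by
  classical
  have h1 : y ∈ G.neighborFinset x := by simpa using hy
  have h2 : z ∈ G.neighborFinset x := by simpa using hz
  exact Finset.card_le_one.1 hd y h1 z h2

lemma not_both_degree_one [DecidableRel G.Adj] (hG : G.Connected)
    (h3 : 3 ≤ Fintype.card V) {u v : V} (h : G.Adj u v) :
    ¬(G.degree u = 1 ∧ G.degree v = 1) := by
  classical
  rintro ⟨hu, hv⟩
  have : ¬ (Finset.univ : Finset V) ⊆ {u, v} := by
    intro hsub
    have := Finset.card_le_card hsub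
    have h2 : ({u, v} : Finset V).card ≤ 2 := Finset.card_insert_le _ _ |>.trans (by simp)
    simp [Finset.card_univ] at this
    omega
  obtain ⟨w, -, hw⟩ := Finset.not_subset.1 this
  have hwu : w ≠ u := fun e => hw (by simp [e])
  have hwv : w ≠ v := fun e => hw (by simp [e])
  obtain ⟨p0⟩ := hG.preconnected u w
  obtain ⟨p, hp⟩ : ∃ p : G.Walk u w, p.IsPath := ⟨p0.toPath.1, p0.toPath.2⟩
  cases p with
  | nil => exact hwu rfl
  | cons h1 q =>
    have hz : _ = v := adj_eq_of_degree_one hu.le h1 h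
    subst hz
    cases q with
    | nil => exact hwv rfl
    | cons h2 r =>
      have hz2 : _ = u := adj_eq_of_degree_one hv.le h2 h.symm
      subst hz2
      rw [Walk.cons_isPath_iff] at hp
      exact hp.2 (by simp [Walk.support_cons, r.start_mem_support])

lemma reachable_induce {s : Set V} : ∀ {u v : V} (p : G.Walk u v)
    (hp : ∀ w ∈ p.support, w ∈ s) (hu : u ∈ s) (hv : v ∈ s),
    (G.induce s).Reachable ⟨u, hu⟩ ⟨v, hv⟩ := by
  intro u v p
  induction p with
  | nil => intro _ _ _; exact Reachable.refl _
  | @cons a b c h q ih =>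
    intro hp hu hv
    have hb : b ∈ s := hp b (by simp)
    have hadj : (G.induce s).Adj ⟨a, hu⟩ ⟨b, hb⟩ := h
    exact hadj.reachable.trans (ih (fun z hz => hp z (by simp [hz])) hb hv)

lemma induce_compl_connected [DecidableRel G.Adj] [DecidableEq V] (hG : G.Connected)
    {x y : V} (hxy : G.Adj x y) (hux : ∀ z, G.Adj x z → z = y) :
    (G.induce ({x}ᶜ : Set V)).Connected := by
  have hyx : y ∈ ({x}ᶜ : Set V) := by simp [hxy.ne']
  have hne : Nonempty ({x}ᶜ : Set V) := ⟨⟨y, hyx⟩⟩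
  refine ⟨?_⟩
  rintro ⟨u, hu⟩ ⟨v, hv⟩
  have hu' : u ≠ x := by simpa using hu
  have hv' : v ≠ x := by simpa using hv
  obtain ⟨p0⟩ := hG.preconnected u v
  obtain ⟨p, hp⟩ : ∃ p : G.Walk u v, p.IsPath := ⟨p0.toPath.1, p0.toPath.2⟩
  have hx : x ∉ p.support := by
    intro hx
    have hq : (p.takeUntil x hx).IsPath := hp.takeUntil hx
    have hr : (p.dropUntil x hx).IsPath := hp.dropUntil hx
    have hyr : y ∈ (p.dropUntil x hx).support.tail := by
      obtain ⟨z, h2, r, hrr⟩ := Walk.not_nil_iff.mp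
        (Walk.not_nil_of_ne (p := p.dropUntil x hx) (fun e => hv' e.symm))
      have hz : z = y := hux _ h2
      rw [← hz, hrr]
      simp [Walk.support_cons]
    have hyq : y ∈ (p.takeUntil x hx).support := by
      obtain ⟨z, h2, r, hrr⟩ := Walk.not_nil_iff.mp
        (Walk.not_nil_of_ne (G := G) (v := x) (w := u) (p := (p.takeUntil x hx).reverse)
          (fun e => hu' e.symm))
      have hz : z = y := hux _ h2
      have : y ∈ (p.takeUntil x hx).reverse.support := by
        rw [← hz, hrr]; simp [Walk.support_cons]
      rwa [Walk.support_reverse, List.mem_reverse] at this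
    have hnd := hp.support_nodup
    rw [← Walk.take_spec p hx, Walk.support_append] at hnd
    exact List.disjoint_of_nodup_append hnd hyq hyr
  have hsup : ∀ w ∈ p.support, w ∈ ({x}ᶜ : Set V) := by
    intro w hw
    simp only [Set.mem_compl_iff, Set.mem_singleton_iff]
    rintro rfl
    exact hx hw
  exact reachable_induce p hsup hu hv

end Graphs

instance pathGraphDecAdj (n : ℕ) : DecidableRel (pathGraph n).Adj := fun a b =>
  decidable_of_iff _ pathGraph_adj.symm



lemma pathGraph_degree_le_two (n : ℕ) (i : Fin n) : (pathGraph n).degree i ≤ 2 := by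
  have : (pathGraph n).degree i = ((pathGraph n).neighborFinset i).card := rfl
  rw [this]
  have h2 : (Finset.univ : Finset Bool).card = 2 := by simp
  rw [← h2]
  apply Finset.card_le_card_of_injOn (fun j => decide (j.val + 1 = i.val))
    (fun _ _ => Finset.mem_univ _)
  intro j1 hj1 j2 hj2 hf
  rw [Finset.mem_coe, mem_neighborFinset, pathGraph_adj] at hj1 hj2
  simp only [decide_eq_decide] at hf
  apply Fin.ext
  omega

lemma pathGraph_degree_end_le {n : ℕ} (hn : 3 ≤ n) (i : Fin n)
    (hi : i.val = 0 ∨ i.val = n - 1) : (pathGraph n).degree i ≤ 1 := by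
  have : (pathGraph n).degree i = ((pathGraph n).neighborFinset i).card := rfl
  rw [this]
  apply Finset.card_le_one.2
  intro j1 hj1 j2 hj2
  rw [mem_neighborFinset, pathGraph_adj] at hj1 hj2
  have := j1.isLt
  have := j2.isLt
  have := i.isLt
  apply Fin.ext
  omega




/-- reversal iso of the path graph -/
def pathRev (n : ℕ) : pathGraph n ≃g pathGraph n where
  toEquiv := (Fin.revPerm : Equiv.Perm (Fin n))
  map_rel_iff' := by
    intro i j
    simp only [Equiv.coe_fn_mk, pathGraph_adj, Fin.revPerm_apply, Fin.val_rev]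
    have hi := i.isLt
    have hj := j.isLt
    omega


lemma pathGraph_endpoint {n : ℕ} (hn : 2 ≤ n) (i : Fin n)
    (h : (pathGraph n).degree i = 1) : i.val = 0 ∨ i.val = n - 1 := by
  by_contra hcon
  push_neg at hcon
  have hi := i.isLt
  have h1 : 0 < i.val := Nat.pos_of_ne_zero hcon.1
  have h2 : i.val < n - 1 := by omega
  have ha : (pathGraph n).Adj i ⟨i.val - 1, by omega⟩ := by
    rw [pathGraph_adj]; right; simp; omega
  have hb : (pathGraph n).Adj i ⟨i.val + 1, by omega⟩ := by
    rw [pathGraph_adj]; left; simp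
  have hsub : ({⟨i.val - 1, by omega⟩, ⟨i.val + 1, by omega⟩} : Finset (Fin n))
      ⊆ (pathGraph n).neighborFinset i := by
    intro a ha'
    rcases Finset.mem_insert.1 ha' with rfl | ha''
    · rw [mem_neighborFinset]; exact ha
    · rw [Finset.mem_singleton] at ha''
      subst ha''
      rw [mem_neighborFinset]; exact hb
  have hcard : ({⟨i.val - 1, by omega⟩, ⟨i.val + 1, by omega⟩} : Finset (Fin n)).card = 2 := by
    rw [Finset.card_insert_of_notMem (by simp only [Finset.mem_singleton, Fin.mk.injEq]; omega), Finset.card_singleton]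
  have hle := Finset.card_le_card hsub
  rw [hcard] at hle
  have hdd : (pathGraph n).degree i = ((pathGraph n).neighborFinset i).card := rfl
  omega

lemma iso_degree {W W' : Type*} [Fintype W] [Fintype W'] {H : SimpleGraph W}
    {H' : SimpleGraph W'} [DecidableRel H.Adj] [DecidableRel H'.Adj]
    (f : H ≃g H') (v : W) : H'.degree (f v) = H.degree v := by
  rw [← card_neighborSet_eq_degree, ← card_neighborSet_eq_degree]
  exact (Fintype.card_congr (f.mapNeighborSet v)).symm

lemma degree_induce_le {V : Type*} [Fintype V] (G : SimpleGraph V) [DecidableRel G.Adj]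
    (s : Set V) [DecidablePred (· ∈ s)] (v : ↥s) :
    (G.induce s).degree v ≤ G.degree v.1 := by
  classical
  apply Finset.card_le_card_of_injOn (fun a => a.1)
  · intro a ha
    simp only [Finset.mem_coe, mem_neighborFinset] at ha ⊢
    exact ha
  · intro a _ b _ h
    exact Subtype.ext h

theorem iso_path : ∀ (n : ℕ) (V : Type u) [Fintype V] [DecidableEq V]
    (G : SimpleGraph V), ∀ [DecidableRel G.Adj],
    Fintype.card V = n → G.Connected → (∀ v, G.degree v ≤ 2) →
    (∃ x, G.degree x ≤ 1) → Nonempty (G ≃g pathGraph n) := by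
  intro n
  induction n with
  | zero =>
    intro V _ _ G _ hcard hconn _ _
    exact absurd hcard (by
      have : 0 < Fintype.card V := Fintype.card_pos_iff.2 hconn.nonempty
      omega)
  | succ n ih =>
    intro V _ _ G _ hcard hconn hdeg hleaf
    rcases Nat.eq_zero_or_pos n with rfl | hn
    · -- card V = 1
      have hsub : Subsingleton V := by
        rw [← Fintype.card_le_one_iff_subsingleton]; omega
      refine ⟨⟨Fintype.equivFinOfCardEq hcard, ?_⟩⟩
      intro a b
      constructor
      · intro h
        exact absurd (Subsingleton.elim a b) (fun e => h.ne (by rw [e]))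
      · intro h
        exact absurd (Subsingleton.elim a b) h.ne
    · -- n ≥ 1, card V = n + 1 ≥ 2
      obtain ⟨x, hx⟩ := hleaf
      have hcard2 : 1 < Fintype.card V := by omega
      have hx1 : G.degree x = 1 := le_antisymm hx (degree_pos_of_connected hconn hcard2 x)
      obtain ⟨y, hy⟩ := G.degree_pos_iff_exists_adj x |>.1 (by omega)
      have hux : ∀ z, G.Adj x z → z = y := fun z hz =>
        adj_eq_of_degree_one hx hz hy
      set s : Set V := ({x}ᶜ : Set V) with hs
      have hys : y ∈ s := by simp [hs, hy.ne']
      have hcard' : Fintype.card ↥s = n := by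
        show Fintype.card ↥({x}ᶜ : Set V) = n
        rw [Fintype.card_compl_set]
        simp [hcard]
      have hcon' : (G.induce s).Connected := induce_compl_connected hconn hy hux
      have hdeg' : ∀ v : ↥s, (G.induce s).degree v ≤ 2 :=
        fun v => le_trans (degree_induce_le G s v) (hdeg v.1)
      set y' : ↥s := ⟨y, hys⟩ with hy'
      have hley : (G.induce s).degree y' ≤ 1 := by
        have hsub : ((G.induce s).neighborFinset y').image (fun a => a.1)
            ⊆ (G.neighborFinset y).erase x := by
          intro a ha
          simp only [Finset.mem_image] at ha
          obtain ⟨b, hb, rfl⟩ := ha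
          rw [mem_neighborFinset] at hb
          have : G.Adj y b.1 := hb
          refine Finset.mem_erase.2 ⟨?_, by rwa [mem_neighborFinset]⟩
          intro e
          have hxx : x ∈ s := e ▸ b.2
          rw [hs] at hxx
          exact hxx rfl
        have h1 : ((G.induce s).neighborFinset y').card ≤ ((G.neighborFinset y).erase x).card := by
          rw [← Finset.card_image_of_injective _ (fun a b h => Subtype.ext h : Function.Injective (fun a : ↥s => a.1))]
          exact Finset.card_le_card hsub
        have h2 : ((G.neighborFinset y).erase x).card = G.degree y - 1 := by
          rw [Finset.card_erase_of_mem (by rw [mem_neighborFinset]; exact hy.symm)]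
          rfl
        have := hdeg y
        rw [SimpleGraph.degree] at *
        omega
      obtain ⟨e'⟩ := ih ↥s (G.induce s) hcard' hcon' hdeg' ⟨y', hley⟩
      -- normalize so that y' maps to 0
      have hn0 : 0 < n := hn
      obtain ⟨e'', he''⟩ : ∃ e'' : G.induce s ≃g pathGraph n, (e'' y').val = 0 := by
        rcases Nat.lt_or_ge n 2 with h2 | h2
        · have : n = 1 := by omega
          subst this
          exact ⟨e', Fin.val_eq_zero _⟩
        · have hdy : (G.induce s).degree y' = 1 := by
            have := degree_pos_of_connected hcon' (by omega) y'
            omega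
          have hpd : (pathGraph n).degree (e' y') = 1 := by
            rw [iso_degree e' y', hdy]
          rcases pathGraph_endpoint h2 (e' y') hpd with h0 | hlast
          · exact ⟨e', h0⟩
          · refine ⟨(pathRev n).comp e', ?_⟩
            simp only [Iso.comp_apply, pathRev]
            show ((e' y').rev).val = 0
            rw [Fin.val_rev]
            omega
      -- build the equivalence V ≃ Fin (n+1)
      have hxs : ∀ v : V, v ≠ x → v ∈ s := by intro v hv; simp [hs, hv]
      let φ : V ≃ Fin (n + 1) :=
        { toFun := fun v => if h : v = x then 0 else (e'' ⟨v, hxs v h⟩).succ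
          invFun := fun i => Fin.cases x (fun j => (e''.symm j).1) i
          left_inv := by
            intro v
            by_cases h : v = x
            · simp [h]
            · simp only [dif_neg h, Fin.cases_succ]
              rw [RelIso.symm_apply_apply]
          right_inv := by
            intro i
            induction i using Fin.cases with
            | zero => simp
            | succ j =>
              simp only [Fin.cases_succ]
              have hne : (e''.symm j).1 ≠ x := by
                intro e
                have hxx : x ∈ s := e ▸ (e''.symm j).2
                rw [hs] at hxx
                exact hxx rfl
              show (if h : (e''.symm j).1 = x then (0 : Fin (n+1)) else (e'' ⟨(e''.symm j).1, hxs _ h⟩).succ) = j.succ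
              rw [dif_neg hne]
              congr 1
              have : (⟨(e''.symm j).1, hxs _ hne⟩ : ↥s) = e''.symm j := Subtype.ext rfl
              rw [this]
              exact e''.apply_symm_apply j }
      have hφx : φ x = 0 := by simp [φ]
      have hφ : ∀ c (hc : c ≠ x), φ c = (e'' ⟨c, hxs c hc⟩).succ := by
        intro c hc
        simp [φ, hc]
      refine ⟨⟨φ, ?_⟩⟩
      intro a b
      show (pathGraph (n+1)).Adj (φ a) (φ b) ↔ G.Adj a b
      have key : ∀ c : V, (hc : c ≠ x) → ((e'' ⟨c, hxs c hc⟩).val = 0 ↔ c = y) := by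
        intro c hc
        constructor
        · intro h0
          have : e'' ⟨c, hxs c hc⟩ = e'' y' := by
            apply Fin.ext
            rw [h0, he'']
          have := e''.toEquiv.injective this
          exact congrArg Subtype.val this
        · rintro rfl
          have : (⟨c, hxs c hc⟩ : ↥s) = y' := Subtype.ext rfl
          rw [this, he'']
      by_cases ha : a = x <;> by_cases hb : b = x
      · subst ha; subst hb
        rw [hφx]
        constructor
        · intro h; exact absurd rfl h.ne
        · intro h; exact absurd rfl h.ne
      · subst ha
        rw [hφx, hφ b hb, pathGraph_adj]
        simp only [Fin.val_zero, Fin.val_succ]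
        constructor
        · intro h
          have h0 : (e'' ⟨b, hxs b hb⟩).val = 0 := by omega
          rw [key b hb] at h0
          subst h0
          exact hy
        · intro h
          have hby : b = y := hux b h
          have h0 : (e'' ⟨b, hxs b hb⟩).val = 0 := (key b hb).2 hby
          omega
      · subst hb
        rw [hφx, hφ a ha, pathGraph_adj]
        simp only [Fin.val_zero, Fin.val_succ]
        constructor
        · intro h
          have h0 : (e'' ⟨a, hxs a ha⟩).val = 0 := by omega
          rw [key a ha] at h0
          subst h0
          exact hy.symm
        · intro h
          have hay : a = y := hux a h.symm
          have h0 : (e'' ⟨a, hxs a ha⟩).val = 0 := (key a ha).2 hay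
          omega
      · rw [hφ a ha, hφ b hb, pathGraph_adj]
        simp only [Fin.val_succ]
        have hiff : G.Adj a b ↔ (G.induce s).Adj ⟨a, hxs a ha⟩ ⟨b, hxs b hb⟩ := by simp
        rw [hiff, ← e''.map_rel_iff]
        show _ ↔ (pathGraph n).Adj _ _
        rw [pathGraph_adj]
        omega

end SomborAux

/-- Lower bound for the Sombor index of connected graphs on n ≥ 3 vertices with
vertex connectivity at most k, with equality iff G ≅ Pₙ. -/
theorem somborIndex_ge_of_vertexConnAtMost {V : Type*} [Fintype V] (G : SimpleGraph V)
    (hG : G.Connected) (n k : ℕ) (hcard : Fintype.card V = n)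
    (hn : 3 ≤ n) (hk : 1 ≤ k) (hconn : vertexConnAtMost G k) :
    2 * Real.sqrt 2 * ((n : ℝ) - 3) + 2 * Real.sqrt 5 ≤ somborIndex G ∧
      (somborIndex G = 2 * Real.sqrt 2 * ((n : ℝ) - 3) + 2 * Real.sqrt 5 ↔
        Nonempty (G ≃g SimpleGraph.pathGraph n)) := by
  classical
  obtain ⟨h2, h2l, h2u⟩ := s2_facts
  obtain ⟨h5, h5l, h5u⟩ := s5_facts
  have h20 := Real.sqrt_nonneg 2
  have h50 := Real.sqrt_nonneg 5
  have hcard3 : 3 ≤ Fintype.card V := by omega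
  have hdeg1 : ∀ v : V, 1 ≤ G.degree v := fun v =>
    degree_pos_of_connected hG (by omega) v
  have hsum_deg : ∑ v, G.degree v = 2 * G.edgeFinset.card :=
    G.sum_degrees_eq_twice_card_edges
  have hmn : Fintype.card V ≤ G.edgeFinset.card + 1 := card_le_edges hG
  have hSO : somborIndex G = ∑ e ∈ G.edgeFinset,
      Sym2.lift ⟨fun u v => Real.sqrt ((G.degree u : ℝ)^2 + (G.degree v : ℝ)^2),
        fun u v => by simp [add_comm]⟩ e := rfl
  have hGsum : ∑ e ∈ G.edgeFinset,
      Sym2.lift ⟨fun u v => gg (G.degree u) + gg (G.degree v),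
        fun u v => by simp [add_comm]⟩ e
      = ∑ v, (G.degree v : ℝ) * gg (G.degree v) :=
    sum_lift_add G (fun v => gg (G.degree v))
  have hvert : ∑ v, (G.degree v : ℝ) * gg (G.degree v)
      = (3*Real.sqrt 2 - Real.sqrt 5) * (2*(G.edgeFinset.card:ℝ))
        + (n : ℝ) * (2*Real.sqrt 5 - 4*Real.sqrt 2) := by
    have hpt : ∀ v : V, (G.degree v : ℝ) * gg (G.degree v)
        = (3*Real.sqrt 2 - Real.sqrt 5) * (G.degree v : ℝ)
          + (2*Real.sqrt 5 - 4*Real.sqrt 2) := by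
      intro v
      have hd : (0:ℝ) < (G.degree v : ℝ) := by exact_mod_cast hdeg1 v
      unfold gg
      field_simp
    have hdegsum : ∑ v, (G.degree v : ℝ) = 2*(G.edgeFinset.card:ℝ) := by
      rw [← Nat.cast_sum]
      rw [hsum_deg]
      push_cast
      ring
    rw [Finset.sum_congr rfl (fun v _ => hpt v), Finset.sum_add_distrib, ← Finset.mul_sum,
      hdegsum, Finset.sum_const, Finset.card_univ, hcard, nsmul_eq_mul]
  have hedge_le : ∀ e ∈ G.edgeFinset,
      Sym2.lift ⟨fun u v => gg (G.degree u) + gg (G.degree v),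
        fun u v => by simp [add_comm]⟩ e
      ≤ Sym2.lift ⟨fun u v => Real.sqrt ((G.degree u : ℝ)^2 + (G.degree v : ℝ)^2),
        fun u v => by simp [add_comm]⟩ e := by
    intro e he
    induction e with
    | _ u v =>
      rw [mem_edgeFinset, mem_edgeSet] at he
      simp only [Sym2.lift_mk]
      exact (key_ineq (hdeg1 u) (hdeg1 v) (not_both_degree_one hG hcard3 he)).1
  have hsum_le : ∑ e ∈ G.edgeFinset,
      Sym2.lift ⟨fun u v => gg (G.degree u) + gg (G.degree v),
        fun u v => by simp [add_comm]⟩ e ≤ somborIndex G := by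
    rw [hSO]
    exact Finset.sum_le_sum hedge_le
  have hc0 : 0 < 3*Real.sqrt 2 - Real.sqrt 5 := by nlinarith
  have hmR : (n:ℝ) - 1 ≤ (G.edgeFinset.card:ℝ) := by
    have : (n:ℝ) ≤ (G.edgeFinset.card:ℝ) + 1 := by
      rw [← hcard]
      exact_mod_cast hmn
    linarith
  have hBle : 2*Real.sqrt 2*((n:ℝ)-3) + 2*Real.sqrt 5
      ≤ (3*Real.sqrt 2 - Real.sqrt 5) * (2*(G.edgeFinset.card:ℝ))
        + (n : ℝ) * (2*Real.sqrt 5 - 4*Real.sqrt 2) := by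
    have hkey : (3*Real.sqrt 2 - Real.sqrt 5) * ((n:ℝ)-1)
        ≤ (3*Real.sqrt 2 - Real.sqrt 5) * (G.edgeFinset.card:ℝ) :=
      mul_le_mul_of_nonneg_left hmR hc0.le
    nlinarith [hkey]
  have hfirst : 2*Real.sqrt 2*((n:ℝ)-3) + 2*Real.sqrt 5 ≤ somborIndex G := by
    calc 2*Real.sqrt 2*((n:ℝ)-3) + 2*Real.sqrt 5
        ≤ (3*Real.sqrt 2 - Real.sqrt 5) * (2*(G.edgeFinset.card:ℝ))
          + (n : ℝ) * (2*Real.sqrt 5 - 4*Real.sqrt 2) := hBle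
      _ = ∑ e ∈ G.edgeFinset,
          Sym2.lift ⟨fun u v => gg (G.degree u) + gg (G.degree v),
            fun u v => by simp [add_comm]⟩ e := by rw [hGsum, hvert]
      _ ≤ somborIndex G := hsum_le
  refine ⟨hfirst, ?_, ?_⟩
  · -- equality implies path
    intro h
    have hGGB : ∑ e ∈ G.edgeFinset,
        Sym2.lift ⟨fun u v => gg (G.degree u) + gg (G.degree v),
          fun u v => by simp [add_comm]⟩ e
        = 2*Real.sqrt 2*((n:ℝ)-3) + 2*Real.sqrt 5 := by
      apply le_antisymm
      · rw [← h]; exact hsum_le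
      · calc 2*Real.sqrt 2*((n:ℝ)-3) + 2*Real.sqrt 5
            ≤ (3*Real.sqrt 2 - Real.sqrt 5) * (2*(G.edgeFinset.card:ℝ))
              + (n : ℝ) * (2*Real.sqrt 5 - 4*Real.sqrt 2) := hBle
          _ = _ := by rw [hGsum, hvert]
    have hsums_eq : ∑ e ∈ G.edgeFinset,
        Sym2.lift ⟨fun u v => gg (G.degree u) + gg (G.degree v),
          fun u v => by simp [add_comm]⟩ e
        = ∑ e ∈ G.edgeFinset,
        Sym2.lift ⟨fun u v => Real.sqrt ((G.degree u : ℝ)^2 + (G.degree v : ℝ)^2),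
          fun u v => by simp [add_comm]⟩ e := by
      rw [hGGB, ← hSO, h]
    have heq := (Finset.sum_eq_sum_iff_of_le hedge_le).1 hsums_eq
    -- m = n - 1
    have hmeqR : (G.edgeFinset.card:ℝ) = (n:ℝ) - 1 := by
      have hrw : (3*Real.sqrt 2 - Real.sqrt 5) * (2*(G.edgeFinset.card:ℝ))
          + (n : ℝ) * (2*Real.sqrt 5 - 4*Real.sqrt 2)
          = 2*Real.sqrt 2*((n:ℝ)-3) + 2*Real.sqrt 5 := by
        rw [← hvert, ← hGsum, hGGB]
      have hrw2 : (3*Real.sqrt 2 - Real.sqrt 5) * (2*((n:ℝ)-1))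
          + (n : ℝ) * (2*Real.sqrt 5 - 4*Real.sqrt 2)
          = 2*Real.sqrt 2*((n:ℝ)-3) + 2*Real.sqrt 5 := by ring
      have := hrw.trans hrw2.symm
      have h2m : (2*(G.edgeFinset.card:ℝ)) = 2*((n:ℝ)-1) :=
        mul_left_cancel₀ (ne_of_gt hc0) (by linarith)
      linarith
    have hmeq : G.edgeFinset.card = n - 1 := by
      have : (G.edgeFinset.card:ℝ) + 1 = (n:ℝ) := by linarith
      have : ((G.edgeFinset.card + 1 : ℕ) : ℝ) = (n:ℝ) := by push_cast; linarith
      have := Nat.cast_injective this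
      omega
    -- all degrees ≤ 2
    have hdeg2 : ∀ v : V, G.degree v ≤ 2 := by
      intro v
      obtain ⟨w, hw⟩ := G.degree_pos_iff_exists_adj v |>.1 (hdeg1 v)
      have he : s(v, w) ∈ G.edgeFinset := by
        rw [mem_edgeFinset, mem_edgeSet]; exact hw
      have := heq s(v, w) he
      simp only [Sym2.lift_mk] at this
      exact ((key_ineq (hdeg1 v) (hdeg1 w)
        (not_both_degree_one hG hcard3 hw)).2 this).1
    -- a vertex of degree ≤ 1 exists
    have hleaf : ∃ x : V, G.degree x ≤ 1 := by
      by_contra hcon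
      push_neg at hcon
      have hall : ∀ v : V, 2 ≤ G.degree v := fun v => hcon v
      have hge : 2 * Fintype.card V ≤ ∑ v, G.degree v := by
        calc 2 * Fintype.card V = (Finset.univ : Finset V).card * 2 := by
              rw [Finset.card_univ]; ring
          _ = (Finset.univ : Finset V).card • 2 := by rw [smul_eq_mul]
          _ ≤ ∑ v, G.degree v := Finset.card_nsmul_le_sum _ _ _ (fun v _ => hall v)
      rw [hsum_deg, hmeq, hcard] at hge
      omega
    exact iso_path n V G hcard hG hdeg2 hleaf
  · -- path implies equality
    rintro ⟨eiso⟩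
    have hdeg2 : ∀ v : V, G.degree v ≤ 2 := by
      intro v
      have hpd := pathGraph_degree_le_two n (eiso v)
      rwa [iso_degree eiso v] at hpd
    set a : V := eiso.symm ⟨0, by omega⟩ with ha
    set b : V := eiso.symm ⟨n-1, by omega⟩ with hb
    have hab : a ≠ b := by
      intro e
      have := eiso.symm.toEquiv.injective (by exact e : eiso.symm ⟨0, by omega⟩ = eiso.symm ⟨n-1, by omega⟩)
      have := congrArg Fin.val this
      simp at this
      omega
    have hda : G.degree a ≤ 1 := by
      have hpd := pathGraph_degree_end_le hn (⟨0, by omega⟩ : Fin n) (Or.inl rfl)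
      have hre : eiso a = ⟨0, by omega⟩ := by rw [ha]; exact eiso.apply_symm_apply _
      rw [← iso_degree eiso a, hre]
      exact hpd
    have hdb : G.degree b ≤ 1 := by
      have hpd := pathGraph_degree_end_le hn (⟨n-1, by omega⟩ : Fin n) (Or.inr rfl)
      have hre : eiso b = ⟨n-1, by omega⟩ := by rw [hb]; exact eiso.apply_symm_apply _
      rw [← iso_degree eiso b, hre]
      exact hpd
    -- edge count = n - 1
    have hmeq : G.edgeFinset.card = n - 1 := by
      have e1 : G.degree a + ∑ v ∈ Finset.univ.erase a, G.degree v = ∑ v, G.degree v :=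
        Finset.add_sum_erase Finset.univ (fun v => G.degree v) (Finset.mem_univ a)
      have hbmem : b ∈ Finset.univ.erase a :=
        Finset.mem_erase.2 ⟨fun e => hab e.symm, Finset.mem_univ b⟩
      have e2 : G.degree b + ∑ v ∈ (Finset.univ.erase a).erase b, G.degree v
          = ∑ v ∈ Finset.univ.erase a, G.degree v :=
        Finset.add_sum_erase (Finset.univ.erase a) (fun v => G.degree v) hbmem
      have e3 : ∑ v ∈ (Finset.univ.erase a).erase b, G.degree v
          ≤ ((Finset.univ.erase a).erase b).card * 2 := by
        rw [← smul_eq_mul]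
        exact Finset.sum_le_card_nsmul _ _ _ (fun v _ => hdeg2 v)
      have ecard : ((Finset.univ.erase a).erase b).card = n - 2 := by
        rw [Finset.card_erase_of_mem hbmem, Finset.card_erase_of_mem (Finset.mem_univ a),
          Finset.card_univ, hcard]
        omega
      rw [ecard] at e3
      have := hsum_deg
      omega
    have hmeqR : (G.edgeFinset.card:ℝ) = (n:ℝ) - 1 := by
      rw [hmeq]
      have : ((n - 1 : ℕ) : ℝ) = (n:ℝ) - 1 := by
        rw [Nat.cast_sub (by omega)]; norm_num
      rw [this]
    have heq : ∀ e ∈ G.edgeFinset,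
        Sym2.lift ⟨fun u v => gg (G.degree u) + gg (G.degree v),
          fun u v => by simp [add_comm]⟩ e
        = Sym2.lift ⟨fun u v => Real.sqrt ((G.degree u : ℝ)^2 + (G.degree v : ℝ)^2),
          fun u v => by simp [add_comm]⟩ e := by
      intro e he
      induction e with
      | _ u v =>
        rw [mem_edgeFinset, mem_edgeSet] at he
        simp only [Sym2.lift_mk]
        have hnb := not_both_degree_one hG hcard3 he
        have h1u := hdeg1 u
        have h1v := hdeg1 v
        have h2u := hdeg2 u
        have h2v := hdeg2 v
        exact key_eq (by omega)
    rw [hSO, ← Finset.sum_congr rfl heq, hGsum, hvert, hmeqR]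
    ring
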